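/- arXiv:1509.08262 — 2 statements merged into one kernel-verified Lean document; each statement's English description precedes it below -/
import Mathlib

section
/- Let X and Z be independent exponential random variables with means m_x > 0 and m_z > 0, and define E₁(a) = ∫_a^∞ (exp(−t)/t) dt for a > 0. Then E[ ln( 1 + X·Z/(Z + 1) ) ] ≥ ln( 1 + m_x·m_z·exp( −2γ_E − exp(1/m_z)·E₁(1/m_z) ) ), where γ_E is the Euler–Mascheroni constant. -/
open MeasureTheory ProbabilityTheory Real Set Filter
open scoped NNReal ENNReal


/-- Integrability of `log t * exp (-t)` on `(0, ∞)`. -/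
lemma integrableOn_log_mul_exp_neg :
    IntegrableOn (fun t : ℝ => Real.log t * Real.exp (-t)) (Ioi 0) := by
  have h1 : IntegrableOn (fun t : ℝ => Real.log t * Real.exp (-t)) (Ioc 0 1) := by
    have hb : IntegrableOn (fun x : ℝ => Real.exp (-x) * x ^ ((1:ℝ)/2 - 1)) (Ioi 0) :=
      Real.GammaIntegral_convergent (by norm_num)
    refine (((hb.mono_set Ioc_subset_Ioi_self).const_mul (2 * Real.exp 1)).mono' ?_ ?_)
    · exact ((measurable_log.mul (measurable_exp.comp measurable_neg)).aestronglyMeasurable)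
    · filter_upwards [ae_restrict_mem measurableSet_Ioc] with x hx
      obtain ⟨hx0, hx1⟩ := hx
      have hex : Real.exp (-x) ≤ 1 := by
        simpa using Real.exp_le_exp.mpr (by linarith : -x ≤ 0)
      have hlog : |Real.log x| ≤ 2 * x ^ (-(1:ℝ)/2) := by
        have hlx : Real.log x ≤ 0 := Real.log_nonpos hx0.le hx1
        rw [abs_of_nonpos hlx]
        have h2 : Real.log (x ^ (-(1:ℝ)/2)) ≤ x ^ (-(1:ℝ)/2) - 1 :=
          Real.log_le_sub_one_of_pos (Real.rpow_pos_of_pos hx0 _)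
        rw [Real.log_rpow hx0] at h2
        nlinarith [Real.rpow_pos_of_pos hx0 (-(1:ℝ)/2)]
      have hxp : (0:ℝ) < x ^ ((1:ℝ)/2 - 1) := Real.rpow_pos_of_pos hx0 _
      have hee : (1:ℝ) ≤ Real.exp 1 * Real.exp (-x) := by
        rw [← Real.exp_add]
        have : (0:ℝ) ≤ 1 + -x := by linarith
        simpa using Real.one_le_exp this
      calc ‖Real.log x * Real.exp (-x)‖ = |Real.log x| * Real.exp (-x) := by
            rw [norm_mul, Real.norm_eq_abs, Real.norm_eq_abs, abs_of_pos (Real.exp_pos _)]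
        _ ≤ |Real.log x| * 1 := by
            exact mul_le_mul_of_nonneg_left hex (abs_nonneg _)
        _ ≤ (2 * x ^ (-(1:ℝ)/2)) * 1 := by
            exact mul_le_mul_of_nonneg_right hlog (by norm_num)
        _ = 2 * x ^ ((1:ℝ)/2 - 1) := by norm_num
        _ ≤ 2 * Real.exp 1 * (Real.exp (-x) * x ^ ((1:ℝ)/2 - 1)) := by nlinarith
  have h2 : IntegrableOn (fun t : ℝ => Real.log t * Real.exp (-t)) (Ioi 1) := by
    have hb : IntegrableOn (fun x : ℝ => Real.exp (-x) * x ^ ((2:ℝ) - 1)) (Ioi 0) :=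
      Real.GammaIntegral_convergent (by norm_num)
    refine (hb.mono_set (Ioi_subset_Ioi zero_le_one)).mono' ?_ ?_
    · exact ((measurable_log.mul (measurable_exp.comp measurable_neg)).aestronglyMeasurable)
    · filter_upwards [ae_restrict_mem measurableSet_Ioi] with x hx
      have hx1 : (1:ℝ) < x := hx
      have hlx : Real.log x ≤ x := (Real.log_le_sub_one_of_pos (by linarith)).trans (by linarith)
      have hl0 : 0 ≤ Real.log x := Real.log_nonneg hx1.le
      calc ‖Real.log x * Real.exp (-x)‖ = Real.log x * Real.exp (-x) := by
            rw [Real.norm_eq_abs, abs_of_nonneg (by positivity)]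
        _ ≤ x * Real.exp (-x) := mul_le_mul_of_nonneg_right hlx (Real.exp_pos _).le
        _ = Real.exp (-x) * x ^ ((2:ℝ) - 1) := by
            rw [show (2:ℝ) - 1 = 1 by norm_num, Real.rpow_one]; ring
  have := h1.union h2
  rwa [Ioc_union_Ioi_eq_Ioi zero_le_one] at this

/-- `∫_{(0,∞)} log t · e^{-t} dt = -γ`. -/
lemma integral_log_mul_exp_neg :
    ∫ t in Ioi (0:ℝ), Real.log t * Real.exp (-t) = -Real.eulerMascheroniConstant := by
  have h1 : HasDerivAt Complex.GammaIntegral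
      (∫ t : ℝ in Ioi 0, (t : ℂ) ^ ((1:ℂ) - 1) * (Real.log t * Real.exp (-t))) 1 :=
    Complex.hasDerivAt_GammaIntegral (by norm_num)
  have hsimp : (∫ t : ℝ in Ioi 0, (t : ℂ) ^ ((1:ℂ) - 1) * (Real.log t * Real.exp (-t)))
      = ((∫ t in Ioi (0:ℝ), Real.log t * Real.exp (-t) : ℝ) : ℂ) := by
    have he : ∀ t : ℝ, (t : ℂ) ^ ((1:ℂ) - 1) * (Real.log t * Real.exp (-t))
        = ((Real.log t * Real.exp (-t) : ℝ) : ℂ) := by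
      intro t
      rw [sub_self, Complex.cpow_zero, one_mul]
      push_cast
      ring
    simp_rw [he]
    exact integral_ofReal
  rw [hsimp] at h1
  set I : ℝ := ∫ t in Ioi (0:ℝ), Real.log t * Real.exp (-t)
  have hEq : Complex.GammaIntegral =ᶠ[nhds (1:ℂ)] Complex.Gamma := by
    have hopen : IsOpen {s : ℂ | 0 < s.re} := isOpen_lt continuous_const Complex.continuous_re
    filter_upwards [hopen.mem_nhds (by norm_num : (0:ℝ) < (1:ℂ).re)] with s hs
    exact (Complex.Gamma_eq_integral hs).symm
  have h2 : HasDerivAt Complex.Gamma (I : ℂ) 1 := h1.congr_of_eventuallyEq hEq.symm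
  have h3 : HasDerivAt (fun x : ℝ => Complex.Gamma (x : ℂ)) (I : ℂ) 1 := by
    exact_mod_cast h2.comp_ofReal
  have h4 : HasDerivAt (fun x : ℝ => ((Real.Gamma x : ℝ) : ℂ)) (I : ℂ) 1 := by
    refine h3.congr_of_eventuallyEq ?_
    filter_upwards with x
    exact (Complex.Gamma_ofReal x).symm
  have h5 : HasDerivAt (fun x : ℝ => ((Real.Gamma x : ℝ) : ℂ))
      ((-Real.eulerMascheroniConstant : ℝ) : ℂ) 1 :=
    Real.hasDerivAt_Gamma_one.ofReal_comp
  have := h4.unique h5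
  exact_mod_cast this


/-- Translation for integrals over `Ioi`. -/
lemma integral_Ioi_comp_add_right (f : ℝ → ℝ) (a d : ℝ) :
    ∫ x in Ioi a, f (x + d) = ∫ x in Ioi (a + d), f x := by
  rw [← integral_indicator measurableSet_Ioi, ← integral_indicator measurableSet_Ioi,
    ← integral_add_right_eq_self (fun x => (Ioi (a + d)).indicator f x) d]
  congr 1
  ext x
  rw [← indicator_comp_right (· + d)]
  · simp only [preimage_add_const_Ioi, add_sub_cancel_right]
    rfl

/-- Integral against the exponential measure. -/
lemma exponentialPDFReal_nonneg' {r : ℝ} (hr : 0 < r) (x : ℝ) :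
    0 ≤ exponentialPDFReal r x := exponentialPDFReal_nonneg hr x

lemma exponentialPDFReal_of_pos {r x : ℝ} (hx : 0 < x) :
    exponentialPDFReal r x = r * Real.exp (-(r * x)) := by
  rw [exponentialPDFReal, gammaPDFReal, if_pos hx.le]
  simp [Real.rpow_one, Real.Gamma_one, Real.rpow_zero]

lemma exponentialPDFReal_of_neg' {r x : ℝ} (hx : x < 0) :
    exponentialPDFReal r x = 0 := by
  rw [exponentialPDFReal, gammaPDFReal, if_neg (not_le.mpr hx)]

lemma expMeasure_eq_withDensity (r : ℝ) :
    expMeasure r = volume.withDensity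
      (fun x => (((exponentialPDFReal r x).toNNReal : ℝ≥0) : ℝ≥0∞)) := rfl

lemma expMeasure_integral {r : ℝ} (hr : 0 < r) (f : ℝ → ℝ) :
    ∫ x, f x ∂(expMeasure r) = ∫ x in Ioi 0, (r * Real.exp (-(r * x))) * f x := by
  rw [expMeasure_eq_withDensity,
    integral_withDensity_eq_integral_smul (measurable_exponentialPDFReal r).real_toNNReal f]
  have h1 : (fun x => (exponentialPDFReal r x).toNNReal • f x)
      = fun x => exponentialPDFReal r x * f x := by
    ext x
    rw [NNReal.smul_def, Real.coe_toNNReal _ (exponentialPDFReal_nonneg' hr x)]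
    rfl
  rw [h1, ← setIntegral_eq_integral_of_forall_compl_eq_zero
      (s := Ici (0:ℝ)) (fun x hx => by
        rw [exponentialPDFReal_of_neg' (not_le.mp (fun h => hx h)), zero_mul]),
    integral_Ici_eq_integral_Ioi]
  refine setIntegral_congr_fun measurableSet_Ioi fun x hx => ?_
  rw [exponentialPDFReal_of_pos hx]


lemma expMeasure_integrable {r : ℝ} (hr : 0 < r) {f : ℝ → ℝ}
    (hm : AEStronglyMeasurable f (expMeasure r))
    (hi : IntegrableOn (fun x => (r * Real.exp (-(r * x))) * f x) (Ioi 0)) :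
    Integrable f (expMeasure r) := by
  rw [expMeasure_eq_withDensity] at hm ⊢
  rw [integrable_withDensity_iff ((measurable_exponentialPDFReal r).real_toNNReal.coe_nnreal_ennreal)
    (Eventually.of_forall fun x => ENNReal.coe_lt_top)]
  have h1 : (fun x => f x * (((exponentialPDFReal r x).toNNReal : ℝ≥0∞)).toReal)
      = fun x => f x * exponentialPDFReal r x := by
    ext x
    rw [ENNReal.coe_toReal, Real.coe_toNNReal _ (exponentialPDFReal_nonneg' hr x)]
  rw [h1, ← integrableOn_univ, ← Iic_union_Ioi (a := (0:ℝ))]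
  refine IntegrableOn.union ?_ (hi.congr_fun (fun x hx => by
    rw [exponentialPDFReal_of_pos hx]; ring) measurableSet_Ioi)
  refine (integrable_zero _ _ _).congr ?_
  refine (ae_restrict_iff' measurableSet_Iic).mpr ?_
  have h0 : ∀ᵐ x : ℝ, x ≠ (0:ℝ) := by
    refine ae_iff.mpr ?_
    simpa using Real.volume_singleton
  filter_upwards [h0] with x hx0 hxI
  rw [exponentialPDFReal_of_neg' (lt_of_le_of_ne (mem_Iic.mp hxI) hx0), mul_zero]
  rfl


lemma integrableOn_expRate_log {r : ℝ} (hr : 0 < r) :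
    IntegrableOn (fun x => (r * Real.exp (-(r * x))) * Real.log x) (Ioi 0) := by
  have h : IntegrableOn (fun x : ℝ => Real.log (r * x) * Real.exp (-(r * x))) (Ioi 0) := by
    have := (integrableOn_Ioi_comp_mul_left_iff
      (fun y : ℝ => Real.log y * Real.exp (-y)) 0 hr).mpr
      (by simpa using integrableOn_log_mul_exp_neg)
    simpa using this
  have hexp : IntegrableOn (fun x : ℝ => Real.exp (-(r * x))) (Ioi 0) := by
    have := exp_neg_integrableOn_Ioi 0 hr
    simpa [neg_mul] using this
  refine MeasureTheory.IntegrableOn.congr_fun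
    ((h.sub (hexp.const_mul (Real.log r))).const_mul r) (fun x hx => ?_) measurableSet_Ioi
  simp only [Pi.sub_apply]
  have hx0 : (0:ℝ) < x := hx
  rw [Real.log_mul hr.ne' hx0.ne']
  ring

lemma integral_expRate_log {r : ℝ} (hr : 0 < r) :
    ∫ x in Ioi (0:ℝ), (r * Real.exp (-(r * x))) * Real.log x
      = -Real.log r - Real.eulerMascheroniConstant := by
  have hA : ∫ x in Ioi (0:ℝ), Real.log (r * x) * Real.exp (-(r * x))
      = r⁻¹ * (-Real.eulerMascheroniConstant) := by
    have := integral_comp_mul_left_Ioi (fun y : ℝ => Real.log y * Real.exp (-y)) 0 hr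
    simpa [integral_log_mul_exp_neg, smul_eq_mul] using this
  have hB : ∫ x in Ioi (0:ℝ), Real.exp (-(r * x)) = r⁻¹ := by
    have := integral_comp_mul_left_Ioi (fun y : ℝ => Real.exp (-y)) 0 hr
    simpa [integral_exp_neg_Ioi_zero, integral_exp_Iic_zero, smul_eq_mul] using this
  have h : IntegrableOn (fun x : ℝ => Real.log (r * x) * Real.exp (-(r * x))) (Ioi 0) := by
    have := (integrableOn_Ioi_comp_mul_left_iff
      (fun y : ℝ => Real.log y * Real.exp (-y)) 0 hr).mpr
      (by simpa using integrableOn_log_mul_exp_neg)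
    simpa using this
  have hexp : IntegrableOn (fun x : ℝ => Real.exp (-(r * x))) (Ioi 0) := by
    have := exp_neg_integrableOn_Ioi 0 hr
    simpa [neg_mul] using this
  have hcongr : ∫ x in Ioi (0:ℝ), (r * Real.exp (-(r * x))) * Real.log x
      = ∫ x in Ioi (0:ℝ), r * (Real.log (r * x) * Real.exp (-(r * x))
        - Real.log r * Real.exp (-(r * x))) := by
    refine setIntegral_congr_fun measurableSet_Ioi fun x hx => ?_
    have hx0 : (0:ℝ) < x := hx
    rw [Real.log_mul hr.ne' hx0.ne']
    ring
  rw [hcongr, integral_const_mul, integral_sub h (hexp.const_mul _), hA,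
    integral_const_mul, hB]
  field_simp
  ring

lemma integrableOn_expRate_log1p {r : ℝ} (hr : 0 < r) :
    IntegrableOn (fun x => (r * Real.exp (-(r * x))) * Real.log (1 + x)) (Ioi 0) := by
  have h2 : IntegrableOn (fun x : ℝ => Real.exp (-(r * x)) * (r * x) ^ ((2:ℝ) - 1)) (Ioi 0) := by
    have := (integrableOn_Ioi_comp_mul_left_iff
      (fun y : ℝ => Real.exp (-y) * y ^ ((2:ℝ) - 1)) 0 hr).mpr
      (by simpa using Real.GammaIntegral_convergent (by norm_num : (0:ℝ) < 2))
    simpa using this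
  refine h2.mono' ?_ ?_
  · exact (((measurable_const.mul (measurable_exp.comp ((measurable_const.mul measurable_id).neg))).mul
      ((measurable_const.add measurable_id).log))).aestronglyMeasurable
  · filter_upwards [ae_restrict_mem measurableSet_Ioi] with x hx
    have hx0 : (0:ℝ) < x := hx
    have hl0 : 0 ≤ Real.log (1 + x) := Real.log_nonneg (by linarith)
    have hlx : Real.log (1 + x) ≤ x := by
      have := Real.log_le_sub_one_of_pos (by linarith : (0:ℝ) < 1 + x)
      linarith
    rw [Real.norm_eq_abs, abs_of_nonneg (by positivity)]
    rw [show (2:ℝ) - 1 = 1 by norm_num, Real.rpow_one]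
    calc r * Real.exp (-(r * x)) * Real.log (1 + x)
        ≤ r * Real.exp (-(r * x)) * x := by
          exact mul_le_mul_of_nonneg_left hlx (by positivity)
      _ = Real.exp (-(r * x)) * (r * x) := by ring

lemma integral_expRate_log1p {r : ℝ} (hr : 0 < r) :
    ∫ x in Ioi (0:ℝ), (r * Real.exp (-(r * x))) * Real.log (1 + x)
      = Real.exp r * ∫ t in Ioi r, Real.exp (-t) / t := by
  have hu : ∀ x ∈ Ioi (0:ℝ), HasDerivAt (fun x : ℝ => Real.log (1 + x)) ((1 + x)⁻¹) x := by
    intro x hx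
    have hx0 : (0:ℝ) < x := hx
    have h := (((hasDerivAt_id x).const_add 1).log (by intro h; simp at h; linarith))
    simpa [one_div] using h
  have hv : ∀ x ∈ Ioi (0:ℝ), HasDerivAt (fun x : ℝ => -Real.exp (-(r * x)))
      (r * Real.exp (-(r * x))) x := fun x _ => hasDerivAt_neg_exp_mul_exp
  have huv' : IntegrableOn ((fun x : ℝ => Real.log (1 + x)) *
      (fun x : ℝ => r * Real.exp (-(r * x)))) (Ioi 0) := by
    refine MeasureTheory.IntegrableOn.congr_fun (integrableOn_expRate_log1p hr)
      (fun x hx => ?_) measurableSet_Ioi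
    simp [Pi.mul_apply]; ring
  have hu'v : IntegrableOn ((fun x : ℝ => (1 + x)⁻¹) *
      (fun x : ℝ => -Real.exp (-(r * x)))) (Ioi 0) := by
    have hexp : IntegrableOn (fun x : ℝ => Real.exp (-(r * x))) (Ioi 0) := by
      have := exp_neg_integrableOn_Ioi 0 hr
      simpa [neg_mul] using this
    refine hexp.mono' ?_ ?_
    · exact (((measurable_const.add measurable_id).inv).mul
        ((measurable_exp.comp ((measurable_const.mul measurable_id).neg)).neg)).aestronglyMeasurable
    · filter_upwards [ae_restrict_mem measurableSet_Ioi] with x hx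
      have hx0 : (0:ℝ) < x := hx
      rw [Pi.mul_apply, norm_mul, norm_neg, Real.norm_eq_abs, Real.norm_eq_abs,
        abs_of_nonneg (by positivity : (0:ℝ) ≤ (1+x)⁻¹), abs_of_nonneg (Real.exp_pos _).le]
      have h1 : (1 + x)⁻¹ ≤ 1 := by
        rw [inv_le_one_iff₀]; right; linarith
      nlinarith [Real.exp_pos (-(r * x))]
  have h_zero : Tendsto ((fun x : ℝ => Real.log (1 + x)) *
      (fun x : ℝ => -Real.exp (-(r * x)))) (nhdsWithin 0 (Ioi 0)) (nhds 0) := by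
    have hca : ContinuousAt (fun x : ℝ => Real.log (1 + x)) 0 := by
      have : ContinuousAt Real.log ((fun x : ℝ => 1 + x) 0) :=
        Real.continuousAt_log (by norm_num)
      exact this.comp (by fun_prop)
    have hct : ContinuousAt ((fun x : ℝ => Real.log (1 + x)) *
        (fun x : ℝ => -Real.exp (-(r * x)))) 0 :=
      hca.mul ((Real.continuous_exp.comp ((continuous_const.mul continuous_id).neg)).neg).continuousAt
    have h := hct.tendsto.mono_left (nhdsWithin_le_nhds (s := Ioi (0:ℝ)))
    simpa using h
  have h_infty : Tendsto ((fun x : ℝ => Real.log (1 + x)) *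
      (fun x : ℝ => -Real.exp (-(r * x)))) atTop (nhds 0) := by
    have hpos : Tendsto (fun x : ℝ => Real.log (1 + x) * Real.exp (-(r * x))) atTop (nhds 0) := by
      have hb : Tendsto (fun x : ℝ => r⁻¹ * ((r * x) ^ 1 * Real.exp (-(r * x)))) atTop (nhds 0) := by
        have h1 : Tendsto (fun y : ℝ => y ^ 1 * Real.exp (-y)) atTop (nhds 0) :=
          tendsto_pow_mul_exp_neg_atTop_nhds_zero 1
        have h2 : Tendsto (fun x : ℝ => r * x) atTop atTop :=
          Tendsto.const_mul_atTop hr tendsto_id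
        have := (h1.comp h2).const_mul r⁻¹
        simpa using this
      refine squeeze_zero' ?_ ?_ hb
      · filter_upwards [eventually_ge_atTop (0:ℝ)] with x hx
        have hl0 : 0 ≤ Real.log (1 + x) := Real.log_nonneg (by linarith)
        positivity
      · filter_upwards [eventually_ge_atTop (0:ℝ)] with x hx
        have hlx : Real.log (1 + x) ≤ x := by
          have := Real.log_le_sub_one_of_pos (by linarith : (0:ℝ) < 1 + x)
          linarith
        calc Real.log (1 + x) * Real.exp (-(r * x)) ≤ x * Real.exp (-(r * x)) :=
              mul_le_mul_of_nonneg_right hlx (Real.exp_pos _).le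
          _ = r⁻¹ * ((r * x) ^ 1 * Real.exp (-(r * x))) := by
              rw [pow_one]
              field_simp
    have h := hpos.neg
    rw [neg_zero] at h
    refine h.congr fun x => ?_
    simp only [Pi.mul_apply]
    ring
  have hparts := integral_Ioi_mul_deriv_eq_deriv_mul hu hv huv' hu'v h_zero h_infty
  have hS : ∫ x in Ioi (0:ℝ), (1 + x)⁻¹ * (-Real.exp (-(r * x)))
      = -∫ x in Ioi (0:ℝ), Real.exp (-(r * x)) / (1 + x) := by
    rw [← integral_neg]
    refine setIntegral_congr_fun measurableSet_Ioi fun x hx => ?_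
    have hx0 : (0:ℝ) < x := hx
    field_simp
  have hshift : ∫ x in Ioi (0:ℝ), Real.exp (-(r * x)) / (1 + x)
      = Real.exp r * ∫ t in Ioi (1:ℝ), Real.exp (-(r * t)) / t := by
    have h1 : ∫ x in Ioi (0:ℝ), Real.exp (-(r * x)) / (1 + x)
        = ∫ x in Ioi (0:ℝ), (fun t => Real.exp r * (Real.exp (-(r * t)) / t)) (x + 1) := by
      refine setIntegral_congr_fun measurableSet_Ioi fun x hx => ?_
      simp only
      rw [← mul_div_assoc, ← Real.exp_add, show r + -(r * (x + 1)) = -(r * x) by ring,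
        add_comm 1 x]
    rw [h1, integral_Ioi_comp_add_right (fun t => Real.exp r * (Real.exp (-(r * t)) / t)) 0 1,
      zero_add, integral_const_mul]
  have hsub : ∫ t in Ioi (1:ℝ), Real.exp (-(r * t)) / t = ∫ u in Ioi r, Real.exp (-u) / u := by
    have h := integral_comp_mul_left_Ioi (fun u : ℝ => Real.exp (-u) / u) 1 hr
    have h2 : ∫ t in Ioi (1:ℝ), Real.exp (-(r * t)) / t
        = r * ∫ x in Ioi (1:ℝ), Real.exp (-(r * x)) / (r * x) := by
      rw [← integral_const_mul]
      refine setIntegral_congr_fun measurableSet_Ioi fun x hx => ?_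
      have hx0 : (0:ℝ) < x := lt_trans zero_lt_one hx
      field_simp
    rw [h2]
    rw [h, smul_eq_mul, mul_one, ← mul_assoc, mul_inv_cancel₀ hr.ne', one_mul]
  have hcomm : ∫ x in Ioi (0:ℝ), (r * Real.exp (-(r * x))) * Real.log (1 + x)
      = ∫ x in Ioi (0:ℝ), ((fun x : ℝ => Real.log (1 + x)) *
        (fun x : ℝ => r * Real.exp (-(r * x)))) x := by
    refine setIntegral_congr_fun measurableSet_Ioi fun x hx => ?_
    simp only [Pi.mul_apply]
    ring
  have hparts' : ∫ x in Ioi (0:ℝ), ((fun x : ℝ => Real.log (1 + x)) *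
        (fun x : ℝ => r * Real.exp (-(r * x)))) x
      = (0:ℝ) - 0 - ∫ x in Ioi (0:ℝ), (1 + x)⁻¹ * (-Real.exp (-(r * x))) := by
    simpa using hparts
  rw [hcomm, hparts', hS, hshift, hsub]
  ring


lemma convexOn_log_one_add_exp :
    ConvexOn ℝ univ (fun t : ℝ => Real.log (1 + Real.exp t)) := by
  have hd : ∀ t : ℝ, HasDerivAt (fun t : ℝ => Real.log (1 + Real.exp t))
      (Real.exp t / (1 + Real.exp t)) t := fun t =>
    ((Real.hasDerivAt_exp t).const_add 1).log (by positivity)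
  have hderiv : deriv (fun t : ℝ => Real.log (1 + Real.exp t))
      = fun t => Real.exp t / (1 + Real.exp t) := funext fun t => (hd t).deriv
  refine MonotoneOn.convexOn_of_deriv convex_univ ?_ ?_ ?_
  · exact (Continuous.log (continuous_const.add Real.continuous_exp)
      (fun t => (by positivity : (0:ℝ) < 1 + Real.exp t).ne')).continuousOn
  · exact fun t _ => (hd t).differentiableAt.differentiableWithinAt
  · rw [hderiv]
    intro a _ b _ hab
    have ha := Real.exp_pos a
    have hb := Real.exp_pos b
    have he : Real.exp a ≤ Real.exp b := Real.exp_le_exp.mpr hab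
    rw [div_le_div_iff₀ (by positivity) (by positivity)]
    nlinarith

lemma ae_pos_of_map_exp {Ω : Type*} [MeasurableSpace Ω] (μ : Measure Ω)
    (X : Ω → ℝ) (hXm : Measurable X) {r : ℝ} (hr : 0 < r)
    (hX : Measure.map X μ = expMeasure r) : ∀ᵐ ω ∂μ, 0 < X ω := by
  have h0 : expMeasure r (Iic 0) = 0 := by
    rw [expMeasure_eq_withDensity, withDensity_apply _ measurableSet_Iic,
      ← Measure.restrict_congr_set (Iio_ae_eq_Iic (a := (0:ℝ)))]
    rw [setLIntegral_congr_fun measurableSet_Iio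
      (fun x (hx : x ∈ Iio (0:ℝ)) => by
        rw [exponentialPDFReal_of_neg' hx])]
    simp
  have hμ : μ (X ⁻¹' (Iic 0)) = 0 := by
    rw [← Measure.map_apply hXm measurableSet_Iic, hX, h0]
  rw [ae_iff]
  convert hμ using 2
  ext ω
  simp [not_lt]


/-- **Lower bound on `T₁ = E[ln(1 + XZ/(Z+1))]` (eq. (24)).** For independent exponentials
`X, Z` with means `m_x, m_z > 0`,
`T₁ ≥ ln(1 + m_x m_z exp(-2γ_E - e^{1/m_z} E₁(1/m_z)))`. -/
theorem T1_lower_bound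
    {Ω : Type*} [MeasurableSpace Ω] (μ : Measure Ω) [IsProbabilityMeasure μ]
    (X Z : Ω → ℝ) (hXm : Measurable X) (hZm : Measurable Z)
    (hindep : IndepFun X Z μ)
    (mx mz : ℝ) (hmx : 0 < mx) (hmz : 0 < mz)
    (hX : Measure.map X μ = expMeasure mx⁻¹)
    (hZ : Measure.map Z μ = expMeasure mz⁻¹)
    (E₁ : ℝ → ℝ) (hE₁ : ∀ a, 0 < a → E₁ a = ∫ t in Set.Ioi a, Real.exp (-t) / t) :
    (∫ ω, Real.log (1 + X ω * Z ω / (Z ω + 1)) ∂μ) ≥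
      Real.log (1 + mx * mz * Real.exp (-2 * Real.eulerMascheroniConstant
        - Real.exp (1 / mz) * E₁ (1 / mz))) := by
  have hrX : (0:ℝ) < mx⁻¹ := by positivity
  have hrZ : (0:ℝ) < mz⁻¹ := by positivity
  set γ := Real.eulerMascheroniConstant
  set c : ℝ := Real.exp (1 / mz) * E₁ (1 / mz) with hc
  have haeX : ∀ᵐ ω ∂μ, 0 < X ω := ae_pos_of_map_exp μ X hXm hrX hX
  have haeZ : ∀ᵐ ω ∂μ, 0 < Z ω := ae_pos_of_map_exp μ Z hZm hrZ hZ
  -- integrability and expectations of the three log components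
  have hIlogX : Integrable (fun ω => Real.log (X ω)) μ := by
    have h1 : Integrable Real.log (expMeasure mx⁻¹) :=
      expMeasure_integrable hrX Real.measurable_log.aestronglyMeasurable
        (integrableOn_expRate_log hrX)
    rw [← hX] at h1
    exact (integrable_map_measure (hX ▸ Real.measurable_log.aestronglyMeasurable)
      hXm.aemeasurable).mp h1
  have hIlogZ : Integrable (fun ω => Real.log (Z ω)) μ := by
    have h1 : Integrable Real.log (expMeasure mz⁻¹) :=
      expMeasure_integrable hrZ Real.measurable_log.aestronglyMeasurable
        (integrableOn_expRate_log hrZ)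
    rw [← hZ] at h1
    exact (integrable_map_measure (hZ ▸ Real.measurable_log.aestronglyMeasurable)
      hZm.aemeasurable).mp h1
  have hm1p : Measurable (fun x : ℝ => Real.log (1 + x)) :=
    Real.measurable_log.comp (measurable_const.add measurable_id)
  have hIlog1pZ : Integrable (fun ω => Real.log (1 + Z ω)) μ := by
    have h1 : Integrable (fun x : ℝ => Real.log (1 + x)) (expMeasure mz⁻¹) :=
      expMeasure_integrable hrZ hm1p.aestronglyMeasurable (integrableOn_expRate_log1p hrZ)
    rw [← hZ] at h1
    exact (integrable_map_measure (hZ ▸ hm1p.aestronglyMeasurable)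
      hZm.aemeasurable).mp h1
  have hIlog1pX : Integrable (fun ω => Real.log (1 + X ω)) μ := by
    have h1 : Integrable (fun x : ℝ => Real.log (1 + x)) (expMeasure mx⁻¹) :=
      expMeasure_integrable hrX hm1p.aestronglyMeasurable (integrableOn_expRate_log1p hrX)
    rw [← hX] at h1
    exact (integrable_map_measure (hX ▸ hm1p.aestronglyMeasurable)
      hXm.aemeasurable).mp h1
  have hElogX : ∫ ω, Real.log (X ω) ∂μ = Real.log mx - γ := by
    have h1 : ∫ x, Real.log x ∂(expMeasure mx⁻¹) = Real.log mx - γ := by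
      rw [expMeasure_integral hrX, integral_expRate_log hrX, Real.log_inv]
      ring
    rw [← h1, ← hX, integral_map hXm.aemeasurable
      (hX ▸ Real.measurable_log.aestronglyMeasurable)]
  have hElogZ : ∫ ω, Real.log (Z ω) ∂μ = Real.log mz - γ := by
    have h1 : ∫ x, Real.log x ∂(expMeasure mz⁻¹) = Real.log mz - γ := by
      rw [expMeasure_integral hrZ, integral_expRate_log hrZ, Real.log_inv]
      ring
    rw [← h1, ← hZ, integral_map hZm.aemeasurable
      (hZ ▸ Real.measurable_log.aestronglyMeasurable)]
  have hElog1pZ : ∫ ω, Real.log (1 + Z ω) ∂μ = c := by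
    have h1 : ∫ x, Real.log (1 + x) ∂(expMeasure mz⁻¹) = c := by
      rw [expMeasure_integral hrZ, integral_expRate_log1p hrZ, hc, hE₁ _ (by positivity),
        one_div]
    rw [← h1, ← hZ, integral_map hZm.aemeasurable (hZ ▸ hm1p.aestronglyMeasurable)]
  -- the affine combination
  set T : Ω → ℝ := fun ω => Real.log (X ω) + Real.log (Z ω) - Real.log (1 + Z ω) with hT
  have hTm : Measurable T :=
    ((Real.measurable_log.comp hXm).add (Real.measurable_log.comp hZm)).sub
      (Real.measurable_log.comp (measurable_const.add hZm))
  have hTint : Integrable T μ := (hIlogX.add hIlogZ).sub hIlog1pZ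
  have hadd : Integrable (fun ω => Real.log (X ω) + Real.log (Z ω)) μ := hIlogX.add hIlogZ
  have hET : ∫ ω, T ω ∂μ = (Real.log mx - γ) + (Real.log mz - γ) - c := by
    simp only [hT]
    rw [integral_sub hadd hIlog1pZ, integral_add hIlogX hIlogZ,
      hElogX, hElogZ, hElog1pZ]
  -- pointwise identification
  have hexpT : ∀ᵐ ω ∂μ, Real.exp (T ω) = X ω * Z ω / (Z ω + 1) := by
    filter_upwards [haeX, haeZ] with ω hx hz
    rw [hT]
    simp only
    rw [Real.exp_sub, Real.exp_add, Real.exp_log hx, Real.exp_log hz,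
      Real.exp_log (by linarith : (0:ℝ) < 1 + Z ω), add_comm 1 (Z ω)]
  have hptwise : ∀ᵐ ω ∂μ, Real.log (1 + X ω * Z ω / (Z ω + 1))
      = Real.log (1 + Real.exp (T ω)) := by
    filter_upwards [hexpT] with ω h
    rw [h]
  -- integrability of the composed function
  have hφTint : Integrable (fun ω => Real.log (1 + Real.exp (T ω))) μ := by
    refine hIlog1pX.mono' ?_ ?_
    · exact (Real.measurable_log.comp
        (measurable_const.add (Real.measurable_exp.comp hTm))).aestronglyMeasurable
    · filter_upwards [hexpT, haeX, haeZ] with ω h hx hz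
      have h0 : 0 ≤ Real.exp (T ω) := (Real.exp_pos _).le
      rw [Real.norm_eq_abs, abs_of_nonneg (Real.log_nonneg (by linarith))]
      have hle : Real.exp (T ω) ≤ X ω := by
        rw [h]
        rw [div_le_iff₀ (by linarith : (0:ℝ) < Z ω + 1)]
        nlinarith
      exact Real.log_le_log (by linarith) (by linarith)
  -- Jensen
  have hjensen := convexOn_log_one_add_exp.map_integral_le
    (Continuous.log (continuous_const.add Real.continuous_exp)
      (fun t => (by positivity : (0:ℝ) < 1 + Real.exp t).ne')).continuousOn
    isClosed_univ (Eventually.of_forall (fun ω => mem_univ (T ω))) hTint hφTint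
  have hEq : ∫ ω, Real.log (1 + X ω * Z ω / (Z ω + 1)) ∂μ
      = ∫ ω, Real.log (1 + Real.exp (T ω)) ∂μ := integral_congr_ae hptwise
  have hval : Real.exp (∫ ω, T ω ∂μ)
      = mx * mz * Real.exp (-2 * γ - c) := by
    rw [hET, show (Real.log mx - γ) + (Real.log mz - γ) - c
      = Real.log mx + (Real.log mz + (-2 * γ - c)) by ring,
      Real.exp_add, Real.exp_add, Real.exp_log hmx, Real.exp_log hmz, mul_assoc]
  rw [ge_iff_le, hEq]
  calc Real.log (1 + mx * mz * Real.exp (-2 * γ - c))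
      = Real.log (1 + Real.exp (∫ ω, T ω ∂μ)) := by rw [hval]
    _ ≤ ∫ ω, Real.log (1 + Real.exp (T ω)) ∂μ := hjensen
end

section
/- Let P > 0, N₀ > 0, η ∈ (0,1], α ∈ (0,1), δ > 1, and let X and W be independent exponential random variables with means λ_SR > 0 and λ_RD > 0. Define ν(x) = 2ηαPx/(N₀(2ηαx + (1−α))) − Pδ/(Px + N₀) and θ₁ = [ (δ−1) + √( (δ−1)² + 4δ·P(1−α)/(2ηαN₀) ) ] / (2P/N₀). Then the secrecy outage probability of the TS policy satisfies ℙ( (1 + 2ηαP·X·W/(N₀(2ηαW + (1−α)))) / (1 + P·X/(P·W + N₀)) < δ ) = 1 − (1/λ_RD)·∫_{θ₁}^{∞} exp( −(δ−1)/(ν(x)·λ_SR) − x/λ_RD ) dx. -/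
open MeasureTheory ProbabilityTheory Real
open scoped ENNReal

lemma expMeasure_apply' (r : ℝ) {s : Set ℝ} (hs : MeasurableSet s) :
    expMeasure r s = ∫⁻ x in s, exponentialPDF r x := by
  rw [expMeasure, gammaMeasure, withDensity_apply _ hs]
  rfl

lemma expMeasure_Iic_zero {r : ℝ} (hr : 0 < r) : expMeasure r (Set.Iic 0) = 0 := by
  rw [expMeasure_apply' _ measurableSet_Iic, lintegral_exponentialPDF_eq_antiDeriv hr 0]
  simp

lemma expMeasure_ae_pos {r : ℝ} (hr : 0 < r) : ∀ᵐ x ∂ expMeasure r, 0 < x := by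
  rw [ae_iff]
  have : {x : ℝ | ¬ (0 < x)} = Set.Iic 0 := by ext x; simp
  rw [this]; exact expMeasure_Iic_zero hr

lemma expMeasure_Iio {r c : ℝ} (hr : 0 < r) (hc : 0 ≤ c) :
    expMeasure r (Set.Iio c) = ENNReal.ofReal (1 - rexp (-(r*c))) := by
  have hsing : expMeasure r {c} = 0 := by
    rw [expMeasure_apply' _ (measurableSet_singleton c)]
    exact setLIntegral_measure_zero _ _ (measure_singleton c)
  rw [measure_congr (Iio_ae_eq_Iic' hsing), expMeasure_apply' _ measurableSet_Iic,
    lintegral_exponentialPDF_eq_antiDeriv hr c, if_pos hc]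

set_option maxHeartbeats 1000000 in
private lemma ts_nu_sign (P N0 η α δ : ℝ) (hP : 0 < P) (hN0 : 0 < N0)
    (hη0 : 0 < η) (hα0 : 0 < α) (hα1 : α < 1) (hδ : 1 < δ)
    (ν : ℝ → ℝ)
    (hν : ∀ x, ν x = 2 * η * α * P * x / (N0 * (2 * η * α * x + (1 - α)))
        - P * δ / (P * x + N0))
    (θ1 : ℝ)
    (hθ1 : θ1 = ((δ - 1)
        + Real.sqrt ((δ - 1) ^ 2 + 4 * δ * (P * (1 - α) / (2 * η * α * N0)))) /
        (2 * (P / N0))) :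
    (0 < θ1) ∧ (∀ w, θ1 < w → 0 < ν w) ∧ (∀ w, 0 < w → w ≤ θ1 → ν w ≤ 0) := by
  have h1α : (0:ℝ) < 1 - α := by linarith
  set K := 4 * δ * (P * (1 - α) / (2 * η * α * N0)) with hK_def
  have hKpos : 0 < K := by
    have h0 : 0 < P * (1 - α) / (2 * η * α * N0) := div_pos (mul_pos hP h1α) (by positivity)
    exact mul_pos (by linarith) h0
  set s := Real.sqrt ((δ - 1) ^ 2 + K) with hs_def
  have hs2 : s ^ 2 = (δ - 1) ^ 2 + K := Real.sq_sqrt (by positivity)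
  have hs0 : 0 ≤ s := Real.sqrt_nonneg _
  have hsB : δ - 1 < s := by nlinarith
  have hθpos : 0 < θ1 := by
    rw [hθ1]; apply div_pos (by linarith) (by positivity)
  have hD1 : ∀ w : ℝ, 0 < w → 0 < N0 * (2 * η * α * w + (1 - α)) := by
    intro w hw; apply mul_pos hN0
    have : 0 < 2 * η * α * w := by positivity
    linarith
  have hD2 : ∀ w : ℝ, 0 < w → 0 < P * w + N0 := by intro w hw; nlinarith
  have hQ : ∀ w : ℝ, 0 < w →
      ν w * (N0 * (2 * η * α * w + (1 - α)) * (P * w + N0))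
        = 2 * η * α * N0 ^ 2 *
          ((P/N0)^2 * w^2 - (P/N0) * (δ - 1) * w - δ * (P * (1 - α) / (2 * η * α * N0))) := by
    intro w hw
    have h1 := (hD1 w hw).ne'
    have h2 := (hD2 w hw).ne'
    rw [hν w]
    field_simp
    ring
  have hA : 0 < P / N0 := div_pos hP hN0
  have hRpos : ∀ w, θ1 < w →
      0 < (P/N0)^2 * w^2 - (P/N0) * (δ - 1) * w - δ * (P * (1 - α) / (2 * η * α * N0)) := by
    intro w hw
    rw [hθ1] at hw
    have h1 : (δ - 1) + s < w * (2 * (P / N0)) := (div_lt_iff₀ (by positivity)).mp hw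
    have hp := mul_pos (show 0 < 2 * (P/N0) * w - (δ-1) - s by linarith)
      (show 0 < 2 * (P/N0) * w - (δ-1) + s by linarith)
    nlinarith
  have hRnonpos : ∀ w, 0 ≤ w → w ≤ θ1 →
      (P/N0)^2 * w^2 - (P/N0) * (δ - 1) * w - δ * (P * (1 - α) / (2 * η * α * N0)) ≤ 0 := by
    intro w hw0 hw
    rw [hθ1] at hw
    have h1 : w * (2 * (P / N0)) ≤ (δ - 1) + s := (le_div_iff₀ (by positivity)).mp hw
    have hp := mul_nonneg (show 0 ≤ s - (2 * (P/N0) * w - (δ-1)) by linarith)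
      (show 0 ≤ s + (2 * (P/N0) * w - (δ-1)) by nlinarith)
    nlinarith
  have hν_eq : ∀ w : ℝ, 0 < w → ν w = (2 * η * α * N0 ^ 2 *
      ((P/N0)^2 * w^2 - (P/N0) * (δ - 1) * w - δ * (P * (1 - α) / (2 * η * α * N0)))) /
      (N0 * (2 * η * α * w + (1 - α)) * (P * w + N0)) := by
    intro w hw
    rw [eq_div_iff (mul_pos (hD1 w hw) (hD2 w hw)).ne']
    exact hQ w hw
  refine ⟨hθpos, fun w hw => ?_, fun w hw0 hw => ?_⟩
  · have hw0 : 0 < w := hθpos.trans hw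
    rw [hν_eq w hw0]
    exact div_pos (mul_pos (by positivity) (hRpos w hw)) (mul_pos (hD1 w hw0) (hD2 w hw0))
  · rw [hν_eq w hw0]
    apply div_nonpos_of_nonpos_of_nonneg _ (mul_pos (hD1 w hw0) (hD2 w hw0)).le
    exact mul_nonpos_of_nonneg_of_nonpos (by positivity) (hRnonpos w hw0.le hw)

set_option maxHeartbeats 1000000 in
private lemma ts_event_iff (P N0 η α δ : ℝ) (hP : 0 < P) (hN0 : 0 < N0)
    (hη0 : 0 < η) (hα0 : 0 < α) (hα1 : α < 1) (hδ : 1 < δ)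
    (ν : ℝ → ℝ)
    (hν : ∀ x, ν x = 2 * η * α * P * x / (N0 * (2 * η * α * x + (1 - α)))
        - P * δ / (P * x + N0)) :
    ∀ w x : ℝ, 0 < w → 0 < x →
      ((1 + 2 * η * α * P * x * w / (N0 * (2 * η * α * w + (1 - α)))) /
        (1 + P * x / (P * w + N0)) < δ ↔ x * ν w < δ - 1) := by
  intro w x hw hx
  have h1α : (0:ℝ) < 1 - α := by linarith
  have hD1 : 0 < N0 * (2 * η * α * w + (1 - α)) := by
    apply mul_pos hN0
    have : 0 < 2 * η * α * w := by positivity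
    linarith
  have hD2 : 0 < P * w + N0 := by positivity
  have hE : 0 < 1 + P * x / (P * w + N0) := by positivity
  rw [div_lt_iff₀ hE]
  have hD1' := hD1.ne'
  have hD2' := hD2.ne'
  have key : x * ν w - (δ - 1)
      = (1 + 2 * η * α * P * x * w / (N0 * (2 * η * α * w + (1 - α))))
        - δ * (1 + P * x / (P * w + N0)) := by
    rw [hν w]
    field_simp
    ring
  constructor <;> intro h <;> linarith [key]

set_option maxHeartbeats 1000000 in

/-- **Secrecy outage probability of the TS policy (Proposition 5).** The high-SNR secrecy
outage probability equals `1 - (1/λ_RD) ∫_{θ₁}^∞ exp(-(δ-1)/(ν(x) λ_SR) - x/λ_RD) dx`. -/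
theorem secrecy_outage_TS
    {Ω : Type*} [MeasurableSpace Ω] (μ : Measure Ω) [IsProbabilityMeasure μ]
    (X W : Ω → ℝ) (hXm : Measurable X) (hWm : Measurable W)
    (hindep : IndepFun X W μ)
    (lamSR lamRD : ℝ) (hlamSR : 0 < lamSR) (hlamRD : 0 < lamRD)
    (hX : Measure.map X μ = expMeasure lamSR⁻¹)
    (hW : Measure.map W μ = expMeasure lamRD⁻¹)
    (P N0 η α δ : ℝ) (hP : 0 < P) (hN0 : 0 < N0)
    (hη0 : 0 < η) (hη1 : η ≤ 1) (hα0 : 0 < α) (hα1 : α < 1) (hδ : 1 < δ)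
    (ν : ℝ → ℝ)
    (hν : ∀ x, ν x = 2 * η * α * P * x / (N0 * (2 * η * α * x + (1 - α)))
        - P * δ / (P * x + N0))
    (θ1 : ℝ)
    (hθ1 : θ1 = ((δ - 1)
        + Real.sqrt ((δ - 1) ^ 2 + 4 * δ * (P * (1 - α) / (2 * η * α * N0)))) /
        (2 * (P / N0))) :
    (μ {ω | (1 + 2 * η * α * P * X ω * W ω / (N0 * (2 * η * α * W ω + (1 - α)))) /
        (1 + P * X ω / (P * W ω + N0)) < δ}).toReal =
      1 - (1 / lamRD) * ∫ x in Set.Ioi θ1,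
        Real.exp (-(δ - 1) / (ν x * lamSR) - x / lamRD) := by
  obtain ⟨hθpos, hνpos, hνnonpos⟩ :=
    ts_nu_sign P N0 η α δ hP hN0 hη0 hα0 hα1 hδ ν hν θ1 hθ1
  have hiff := ts_event_iff P N0 η α δ hP hN0 hη0 hα0 hα1 hδ ν hν
  have ha : (0:ℝ) < lamSR⁻¹ := inv_pos.mpr hlamSR
  have hb : (0:ℝ) < lamRD⁻¹ := inv_pos.mpr hlamRD
  haveI hPa : IsProbabilityMeasure (expMeasure lamSR⁻¹) := isProbabilityMeasure_expMeasure ha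
  haveI hPb : IsProbabilityMeasure (expMeasure lamRD⁻¹) := isProbabilityMeasure_expMeasure hb
  -- measurability of ν
  have hνm : Measurable ν := by
    have : ν = fun x => 2 * η * α * P * x / (N0 * (2 * η * α * x + (1 - α)))
        - P * δ / (P * x + N0) := funext hν
    rw [this]
    fun_prop
  -- the joint set
  set T : Set (ℝ × ℝ) := {p : ℝ × ℝ |
      (1 + 2 * η * α * P * p.2 * p.1 / (N0 * (2 * η * α * p.1 + (1 - α)))) /
        (1 + P * p.2 / (P * p.1 + N0)) < δ} with hT_def
  have hTm : MeasurableSet T := by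
    apply measurableSet_lt _ measurable_const
    fun_prop
  have hmap : μ.map (fun ω => (W ω, X ω)) = (expMeasure lamRD⁻¹).prod (expMeasure lamSR⁻¹) := by
    rw [← hW, ← hX]
    exact (indepFun_iff_map_prod_eq_prod_map_map hWm.aemeasurable hXm.aemeasurable).mp hindep.symm
  have hSeq : {ω | (1 + 2 * η * α * P * X ω * W ω / (N0 * (2 * η * α * W ω + (1 - α)))) /
        (1 + P * X ω / (P * W ω + N0)) < δ} = (fun ω => (W ω, X ω)) ⁻¹' T := rfl
  rw [hSeq, ← Measure.map_apply (hWm.prodMk hXm) hTm, hmap, Measure.prod_apply hTm]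
  -- indicator function
  set f : ℝ → ℝ≥0∞ := Set.indicator (Set.Ioi θ1)
      (fun w => ENNReal.ofReal (rexp (-(δ - 1) / (ν w * lamSR)))) with hf_def
  have hg_meas : Measurable (fun w => ENNReal.ofReal (rexp (-(δ - 1) / (ν w * lamSR)))) := by
    fun_prop
  have hf_meas : Measurable f := hg_meas.indicator measurableSet_Ioi
  have hf_le : ∀ w, f w ≤ 1 := by
    intro w
    rw [hf_def]
    by_cases hw : w ∈ Set.Ioi θ1
    · rw [Set.indicator_of_mem hw]
      rw [ENNReal.ofReal_le_one]
      apply Real.exp_le_one_iff.mpr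
      apply div_nonpos_of_nonpos_of_nonneg (by linarith)
      exact (mul_pos (hνpos w hw) hlamSR).le
    · rw [Set.indicator_of_notMem hw]; exact zero_le_one
  -- slice computation
  have hslice : ∀ᵐ w ∂ expMeasure lamRD⁻¹,
      expMeasure lamSR⁻¹ (Prod.mk w ⁻¹' T) = 1 - f w := by
    filter_upwards [expMeasure_ae_pos hb] with w hw
    by_cases hwθ : θ1 < w
    · have hν' := hνpos w hwθ
      have hc : 0 ≤ (δ - 1) / ν w := (div_pos (by linarith) hν').le
      have hTeq : Prod.mk w ⁻¹' T =ᵐ[expMeasure lamSR⁻¹] Set.Iio ((δ - 1) / ν w) := by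
        rw [Filter.eventuallyEq_set]
        filter_upwards [expMeasure_ae_pos ha] with x hx
        simp only [Set.mem_preimage, hT_def, Set.mem_setOf_eq, Set.mem_Iio]
        exact (hiff w x hw hx).trans (lt_div_iff₀ hν').symm
      rw [measure_congr hTeq, expMeasure_Iio ha hc, hf_def,
        Set.indicator_of_mem (Set.mem_Ioi.mpr hwθ)]
      have harg : -(lamSR⁻¹ * ((δ - 1) / ν w)) = -(δ - 1) / (ν w * lamSR) := by
        field_simp
      rw [harg, ENNReal.ofReal_sub _ (Real.exp_pos _).le, ENNReal.ofReal_one]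
    · push_neg at hwθ
      rw [hf_def, Set.indicator_of_notMem (by simpa using hwθ), tsub_zero]
      have hpos1 : expMeasure lamSR⁻¹ {x : ℝ | 0 < x} = 1 := by
        have hcompl : {x : ℝ | 0 < x} = (Set.Iic 0)ᶜ := by ext x; simp
        rw [hcompl, prob_compl_eq_one_sub measurableSet_Iic, expMeasure_Iic_zero ha, tsub_zero]
      apply le_antisymm prob_le_one
      rw [← hpos1]
      apply measure_mono
      intro x hx
      simp only [Set.mem_setOf_eq] at hx
      simp only [Set.mem_preimage, hT_def, Set.mem_setOf_eq]
      rw [hiff w x hw hx]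
      nlinarith [hνnonpos w hw hwθ, hx]
  rw [lintegral_congr_ae hslice]
  have hL_le : ∫⁻ w, f w ∂ expMeasure lamRD⁻¹ ≤ 1 := by
    calc ∫⁻ w, f w ∂ expMeasure lamRD⁻¹ ≤ ∫⁻ _, 1 ∂ expMeasure lamRD⁻¹ :=
        lintegral_mono hf_le
      _ = 1 := by simp
  rw [lintegral_sub hf_meas (hL_le.trans_lt ENNReal.one_lt_top).ne
    (ae_of_all _ hf_le), lintegral_one, measure_univ,
    ENNReal.toReal_sub_of_le hL_le ENNReal.one_ne_top, ENNReal.toReal_one]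
  congr 1
  -- compute the lintegral of f
  rw [hf_def, lintegral_indicator measurableSet_Ioi]
  have hmeq : expMeasure lamRD⁻¹ = volume.withDensity (exponentialPDF lamRD⁻¹) := rfl
  have hpdf_meas : Measurable (exponentialPDF lamRD⁻¹) :=
    (measurable_exponentialPDFReal lamRD⁻¹).ennreal_ofReal
  rw [hmeq, setLIntegral_withDensity_eq_setLIntegral_mul _ hpdf_meas hg_meas measurableSet_Ioi]
  have hpt : ∀ w ∈ Set.Ioi θ1,
      (exponentialPDF lamRD⁻¹ * fun w => ENNReal.ofReal (rexp (-(δ - 1) / (ν w * lamSR)))) w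
        = ENNReal.ofReal (lamRD⁻¹ * rexp (-(δ - 1) / (ν w * lamSR) - w / lamRD)) := by
    intro w hw
    have hw0 : (0:ℝ) ≤ w := (hθpos.trans hw).le
    rw [Pi.mul_apply, exponentialPDF_of_nonneg hw0, ← ENNReal.ofReal_mul (by positivity)]
    congr 1
    rw [mul_assoc, ← Real.exp_add]
    congr 1
    ring
  rw [setLIntegral_congr_fun measurableSet_Ioi hpt]
  have hhm : Measurable fun x : ℝ => lamRD⁻¹ * rexp (-(δ - 1) / (ν x * lamSR) - x / lamRD) :=
    (((measurable_const.div (hνm.mul_const _)).sub (measurable_id.div_const _)).exp).const_mul _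
  rw [← integral_eq_lintegral_of_nonneg_ae (ae_of_all _ fun w => by positivity)
    hhm.aestronglyMeasurable]
  rw [MeasureTheory.integral_const_mul, one_div]
end
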